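/- With the notation of the context, for every particle array v ∈ Z^{T·M} and every index path k ∈ {1,…,M}^T one has r_{k,v}(θ,ϑ) = r_{𝟏, s_{1,k}(v)}(θ,ϑ), i.e. the averaged acceptance ratio started from the path v^{(k)} equals the averaged acceptance ratio started from the first path of the array obtained by swapping v^{(𝟏)} and v^{(k)}. -/
import Mathlib


open MeasureTheory Finset

namespace MHAARRB7

variable {Z : Type*}

/-- The path `v^{(k)}` extracted from the particle array `v`. -/
def pathOf (n m : ℕ) (v : Fin (n + 1) → Fin (m + 1) → Z)
    (k : Fin (n + 1) → Fin (m + 1)) : Fin (n + 1) → Z := fun t => v t (k t)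

/-- The constant index path `𝟏`. -/
def onePath (n m : ℕ) : Fin (n + 1) → Fin (m + 1) := fun _ => 0

/-- The swap operator `s_{1,k}`. -/
def swapArr (n m : ℕ) (k : Fin (n + 1) → Fin (m + 1))
    (v : Fin (n + 1) → Fin (m + 1) → Z) : Fin (n + 1) → Fin (m + 1) → Z :=
  fun t i => v t (Equiv.swap 0 (k t) i)

/-- The selection probabilities `b_{θ,ϑ}(k|v)`. -/
noncomputable def bSel (n m : ℕ) (γ qp : Fin (n + 1) → Z → ℝ)
    (k : Fin (n + 1) → Fin (m + 1)) (v : Fin (n + 1) → Fin (m + 1) → Z) : ℝ :=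
  ∏ t, (γ t (v t (k t)) / qp t (v t (k t))) / (∑ j, γ t (v t j) / qp t (v t j))

/-- The acceptance ratio `r_{z,z'}(θ,ϑ)`. -/
noncomputable def accRatio (n : ℕ) (ηθ ηϑ qθϑ qϑθ : ℝ)
    (γθ γϑ γθϑ : Fin (n + 1) → Z → ℝ) (z z' : Fin (n + 1) → Z) : ℝ :=
  qϑθ * ηϑ / (qθϑ * ηθ) *
    ∏ t, (γθϑ t (z t) / γθ t (z t)) * (γϑ t (z' t) / γθϑ t (z' t))

/-- The averaged ratio `r_{l,v}(θ,ϑ)`. -/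
noncomputable def rBar (n m : ℕ) (ηθ ηϑ qθϑ qϑθ : ℝ)
    (γθ γϑ γθϑ qp : Fin (n + 1) → Z → ℝ)
    (l : Fin (n + 1) → Fin (m + 1)) (v : Fin (n + 1) → Fin (m + 1) → Z) : ℝ :=
  ∑ k : Fin (n + 1) → Fin (m + 1),
    bSel n m γθϑ qp k v *
      accRatio n ηθ ηϑ qθϑ qϑθ γθ γϑ γθϑ (pathOf n m v l) (pathOf n m v k)

/-- For every particle array `v` and index path `k`,
`r_{k,v}(θ,ϑ) = r_{𝟏,s_{1,k}(v)}(θ,ϑ)`. -/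
theorem rBar_swap_invariance
    [MeasurableSpace Z] (n m : ℕ)
    (γθ γϑ γθϑ qp : Fin (n + 1) → Z → ℝ)
    (hγθm : ∀ t, Measurable (γθ t)) (hγϑm : ∀ t, Measurable (γϑ t))
    (hγθϑm : ∀ t, Measurable (γθϑ t)) (hqpm : ∀ t, Measurable (qp t))
    (hγθ : ∀ t z, 0 < γθ t z) (hγϑ : ∀ t z, 0 < γϑ t z)
    (hγθϑ : ∀ t z, 0 < γθϑ t z) (hqp : ∀ t z, 0 < qp t z)
    (ηθ ηϑ qθϑ qϑθ : ℝ)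
    (hηθ : 0 < ηθ) (hηϑ : 0 < ηϑ) (hqθϑ : 0 < qθϑ) (hqϑθ : 0 < qϑθ)
    (v : Fin (n + 1) → Fin (m + 1) → Z) (k : Fin (n + 1) → Fin (m + 1)) :
    rBar n m ηθ ηϑ qθϑ qϑθ γθ γϑ γθϑ qp k v
      = rBar n m ηθ ηϑ qθϑ qϑθ γθ γϑ γθϑ qp (onePath n m) (swapArr n m k v) := by
  classical
  unfold rBar
  refine Fintype.sum_equiv (Equiv.piCongrRight fun t => Equiv.swap 0 (k t)) _ _ ?_
  intro k'
  have hpath : pathOf n m (swapArr n m k v)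
      (Equiv.piCongrRight (fun t => Equiv.swap 0 (k t)) k') = pathOf n m v k' := by
    funext t
    simp [pathOf, swapArr, Equiv.swap_apply_self]
  have hone : pathOf n m (swapArr n m k v) (onePath n m) = pathOf n m v k := by
    funext t
    simp [pathOf, swapArr, onePath]
  have hb : bSel n m γθϑ qp (Equiv.piCongrRight (fun t => Equiv.swap 0 (k t)) k')
      (swapArr n m k v) = bSel n m γθϑ qp k' v := by
    unfold bSel
    refine Finset.prod_congr rfl fun t _ => ?_
    have hnum : (swapArr n m k v) t
        ((Equiv.piCongrRight (fun t => Equiv.swap 0 (k t)) k') t) = v t (k' t) := by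
      simp [swapArr, Equiv.piCongrRight, Equiv.swap_apply_self]
    rw [hnum]
    congr 1
    exact Fintype.sum_equiv (Equiv.swap 0 (k t)) _ _
      (fun j => by simp [swapArr, Equiv.swap_apply_self])
  rw [hb, hpath, hone]

end MHAARRB7
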